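/- Let B ≠ 0, C ∈ ℝ, c ≠ 0, and let ω : I → ℝ be twice differentiable on an open interval I on which Bz + C ≠ 0, with ω'(z) = c·exp(−1/(Bz+C)) for all z ∈ I. Define A(x,y,z) = ω(z)/x for x ≠ 0. Then for all x ≠ 0, y ∈ ℝ, z ∈ I, the Rashevsky identity A''(x,y,z)·f(x,z) + z·A'_y + A'_x − A_y = 0 holds with f(x,z) = (Bz+C)²/(Bx); that is, the equation y'' = (1/(Bx))·(By' + C)² is the geodesic equation of the Finsler metric with associated fundamental function A = ω(z)/x. -/

import Mathlib

noncomputable section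

/-- Partial derivative in the third variable `z`. -/
def pZ (A : ℝ → ℝ → ℝ → ℝ) : ℝ → ℝ → ℝ → ℝ := fun x y z => deriv (fun t => A x y t) z

/-- Partial derivative in the first variable `x`. -/
def pX (A : ℝ → ℝ → ℝ → ℝ) : ℝ → ℝ → ℝ → ℝ := fun x y z => deriv (fun t => A t y z) x

/-- Partial derivative in the second variable `y`. -/
def pY (A : ℝ → ℝ → ℝ → ℝ) : ℝ → ℝ → ℝ → ℝ := fun x y z => deriv (fun t => A x t z) y

/-- The associated fundamental function `A(x,y,z) = ω(z)/x`. -/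
def Aom (ω : ℝ → ℝ) : ℝ → ℝ → ℝ → ℝ := fun x _y z => ω z / x

/-- if `ω'(z) = c·exp(−1/(Bz+C))` on an open interval `I` where
`Bz + C ≠ 0`, then `A = ω(z)/x` satisfies the Rashevsky identity with
`f(x,z) = (Bz+C)²/(Bx)`, i.e. `y'' = (1/(Bx))·(By'+C)²` is the geodesic equation of
the Finsler metric with associated fundamental function `A`. -/
theorem stmt_9 (B C c : ℝ) (hB : B ≠ 0) (hc : c ≠ 0)
    (I : Set ℝ) (hI : IsOpen I) (hIint : I.OrdConnected)
    (hBC : ∀ z ∈ I, B * z + C ≠ 0)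
    (ω : ℝ → ℝ)
    (hω1 : ∀ z ∈ I, DifferentiableAt ℝ ω z)
    (hω2 : ∀ z ∈ I, DifferentiableAt ℝ (deriv ω) z)
    (hω : ∀ z ∈ I, deriv ω z = c * Real.exp (-(1 / (B * z + C)))) :
    ∀ x y z : ℝ, x ≠ 0 → z ∈ I →
      pZ (pZ (Aom ω)) x y z * ((B * z + C) ^ 2 / (B * x))
        + z * pY (pZ (Aom ω)) x y z + pX (pZ (Aom ω)) x y z - pY (Aom ω) x y z = 0 := by
  intro x y z hx hz
  have hu : B * z + C ≠ 0 := hBC z hz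
  -- pZ (Aom ω) is (fun x y z => deriv ω z / x)
  have hpZ : pZ (Aom ω) = fun x _y z => deriv ω z / x := by
    funext a b t
    simp [pZ, Aom, deriv_div_const]
  -- second z-derivative
  have hdd : deriv (deriv ω) z = c * Real.exp (-(1 / (B * z + C))) * (B / (B * z + C) ^ 2) := by
    have hev : deriv ω =ᶠ[nhds z] fun t => c * Real.exp (-(1 / (B * t + C))) := by
      filter_upwards [hI.mem_nhds hz] with t ht using hω t ht
    rw [hev.deriv_eq]
    have h1 : HasDerivAt (fun t : ℝ => B * t + C) B z := by
      simpa using ((hasDerivAt_id z).const_mul B).add_const C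
    have h2 : HasDerivAt (fun t : ℝ => -(1 / (B * t + C)))
        (B / (B * z + C) ^ 2) z := by
      have := (h1.inv hu).neg
      simp only [one_div]
      exact this.congr_deriv (by ring)
    have h3 := ((h2.exp).const_mul c)
    rw [h3.deriv]
    ring
  have hzz : pZ (pZ (Aom ω)) x y z
      = c * Real.exp (-(1 / (B * z + C))) * (B / (B * z + C) ^ 2) / x := by
    rw [hpZ]
    simp [pZ, deriv_div_const, hdd]
  have hyz : pY (pZ (Aom ω)) x y z = 0 := by
    rw [hpZ]; simp [pY]
  have hxz : pX (pZ (Aom ω)) x y z = -(deriv ω z) / x ^ 2 := by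
    rw [hpZ]
    have : HasDerivAt (fun t : ℝ => deriv ω z / t) (-(deriv ω z) / x ^ 2) x := by
      have := (hasDerivAt_inv hx).const_mul (deriv ω z)
      simp only [div_eq_mul_inv]
      exact this.congr_deriv (by ring)
    simpa [pX] using this.deriv
  have hyA : pY (Aom ω) x y z = 0 := by simp [pY, Aom]
  rw [hzz, hyz, hxz, hyA, hω z hz]
  have hexp := Real.exp_ne_zero (-(1 / (B * z + C)))
  field_simp
  ring
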